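/- Let k, m ≥ 1 be integers and ε > 0. Let D = D_1 × D_2 × ... × D_m be an m-product probability distribution on [k]^m, where each D_r is a probability distribution on {1,...,k}. Let a_1,...,a_{k+1} be the output of the granularising algorithm applied to the probability vector of D_1 (with n := k), let D'_1 be the distribution on {1,...,k+1} with D'_1(i) = a_i/(8k), and let D' := D'_1 × D_2 × ... × D_m on {1,...,k+1} × [k]^{m−1}. Let X : [k]^m → {0,1}, let L be a nonempty set of functions [k]^m → {0,1}, and let L_0 := {g^cat(Y) : Y ∈ L}. If d_D(X, L) > ε, then d_{D'}(g^cat(X), L_0) > ε/2. Moreover, if X ∈ L then g^cat(X) ∈ L_0. -/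

import Mathlib

/-- Distance between two functions along a distribution `D` on a finite index set:
`d_D(x,y) = ∑_{i : x i ≠ y i} D i`. -/
noncomputable def dDist {α β : Type*} [Fintype α] (D : α → ℝ) (x y : α → β) : ℝ :=
  letI := Classical.decEq β
  ∑ i, if x i = y i then 0 else D i

/-- Distance from a point to a (nonempty) set of functions:
`d_D(x,L) = min_{y ∈ L} d_D(x,y)`. -/
noncomputable def dSetDist {α β : Type*} [Fintype α] (D : α → ℝ) (x : α → β)
    (L : Set (α → β)) : ℝ :=
  sInf ((fun y => dDist D x y) '' L)

/-- The last granularity output by the granularising algorithm: `a_{k+1} = 8k − ∑ᵢ aᵢ`. -/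
def lastGrain {k : ℕ} (a : Fin k → ℕ) : ℕ := 8 * k - ∑ i, a i

/-- The `8k`-grained distribution on `{1,...,k+1}` defined by the granularities. -/
noncomputable def granDist {k : ℕ} (a : Fin k → ℕ) : Fin (k + 1) → ℝ :=
  Fin.snoc (fun i => (a i : ℝ) / (8 * k)) ((lastGrain a : ℝ) / (8 * k))

/-- The `(m+1)`-product distribution `D = D₁ × D₂ × ⋯ × D_{m+1}` on
`[k]^{m+1} ≅ {1,...,k} × [k]^m`, given the coordinate distributions `Ds`. -/
noncomputable def prodD {k m : ℕ} (Ds : Fin (m + 1) → Fin k → ℝ) :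
    Fin k × (Fin m → Fin k) → ℝ :=
  fun q => Ds 0 q.1 * ∏ r : Fin m, Ds r.succ (q.2 r)

/-- The distribution `D' = D₁' × D₂ × ⋯ × D_{m+1}` on `{1,...,k+1} × [k]^m`, where the
first coordinate distribution has been replaced by `D₁'`. -/
noncomputable def prodD' {k m : ℕ} (D₁' : Fin (k + 1) → ℝ) (Ds : Fin (m + 1) → Fin k → ℝ) :
    Fin (k + 1) × (Fin m → Fin k) → ℝ :=
  fun q => D₁' q.1 * ∏ r : Fin m, Ds r.succ (q.2 r)

/-- `g^cat(X)` agrees with `X` on first-coordinate values `1,...,k` and is identically `0`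
(i.e. `false`) on first-coordinate value `k+1`. -/
def gcatB {k : ℕ} {Γ : Type*} (X : Fin k × Γ → Bool) : Fin (k + 1) × Γ → Bool :=
  fun q => (Fin.snoc (fun i (j : Γ) => X (i, j)) (fun _ => false) : Fin (k + 1) → Γ → Bool)
    q.1 q.2

/-- Granularising the first coordinate of an `(m+1)`-product distribution preserves
distances: if `d_D(X,L) > ε` then `d_{D'}(g^cat(X), L₀) > ε/2`, and if `X ∈ L` then
`g^cat(X) ∈ L₀`.  (Here the paper's `m ≥ 1` is `m + 1` for `m : ℕ`.) -/
theorem product_granularise_preserves_distance {k m : ℕ} (hk : 1 ≤ k)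
    (ε : ℝ) (hε : 0 < ε)
    (Ds : Fin (m + 1) → Fin k → ℝ)
    (hDs0 : ∀ r i, 0 ≤ Ds r i) (hDs1 : ∀ r, ∑ i, Ds r i = 1)
    (a : Fin k → ℕ) (ha : ∀ i, a i = ⌊(6 * (k : ℝ)) * Ds 0 i⌋₊ + 2)
    (X : Fin k × (Fin m → Fin k) → Bool)
    (L : Set (Fin k × (Fin m → Fin k) → Bool)) (hL : L.Nonempty) :
    (ε < dSetDist (prodD Ds) X L →
      ε / 2 < dSetDist (prodD' (granDist a) Ds) (gcatB X) (gcatB '' L)) ∧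
    (X ∈ L → gcatB X ∈ gcatB '' L) := by
  classical
  refine ⟨?_, fun hX => Set.mem_image_of_mem _ hX⟩
  intro hlt
  have hk' : (0:ℝ) < 8 * k := by
    have : (1:ℝ) ≤ k := by exact_mod_cast hk
    linarith
  have hprodn : ∀ j : Fin m → Fin k, 0 ≤ ∏ r : Fin m, Ds r.succ (j r) :=
    fun j => Finset.prod_nonneg fun r _ => hDs0 _ _
  have hgran : ∀ i : Fin k, Ds 0 i / 2 ≤ granDist a (Fin.castSucc i) := by
    intro i
    have h1 : 6 * (k:ℝ) * Ds 0 i < a i := by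
      rw [ha i]
      push_cast
      have := Nat.lt_floor_add_one (6 * (k:ℝ) * Ds 0 i)
      linarith
    have hp := hDs0 0 i
    have hk2 : (1:ℝ) ≤ k := by exact_mod_cast hk
    simp only [granDist, Fin.snoc_castSucc]
    rw [div_le_div_iff₀ two_pos hk']
    nlinarith
  have key : ∀ Y, dDist (prodD Ds) X Y / 2
      ≤ dDist (prodD' (granDist a) Ds) (gcatB X) (gcatB Y) := by
    intro Y
    have hL2 : dDist (prodD' (granDist a) Ds) (gcatB X) (gcatB Y)
        = ∑ i : Fin k, ∑ j, if X (i, j) = Y (i, j) then 0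
            else granDist a (Fin.castSucc i) * ∏ r : Fin m, Ds r.succ (j r) := by
      rw [dDist]
      rw [Fintype.sum_prod_type]
      rw [Fin.sum_univ_castSucc]
      simp [gcatB, Fin.snoc_castSucc, Fin.snoc_last, prodD']
    have hL1 : dDist (prodD Ds) X Y
        = ∑ i : Fin k, ∑ j, if X (i, j) = Y (i, j) then 0
            else Ds 0 i * ∏ r : Fin m, Ds r.succ (j r) := by
      rw [dDist, Fintype.sum_prod_type]
      simp [prodD]
      exact Finset.sum_congr rfl fun i _ => Finset.sum_congr rfl fun j _ => by congr
    rw [hL1, hL2, Finset.sum_div]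
    refine Finset.sum_le_sum fun i _ => ?_
    rw [Finset.sum_div]
    refine Finset.sum_le_sum fun j _ => ?_
    by_cases h : X (i, j) = Y (i, j)
    · simp [h]
    · simp only [h, if_false]
      calc (Ds 0 i * ∏ r : Fin m, Ds r.succ (j r)) / 2
          = Ds 0 i / 2 * ∏ r : Fin m, Ds r.succ (j r) := by ring
        _ ≤ _ := mul_le_mul_of_nonneg_right (hgran i) (hprodn j)
  -- nonnegativity of all distances for D
  have hDn : ∀ Y, (0:ℝ) ≤ dDist (prodD Ds) X Y := by
    intro Y
    rw [dDist]
    refine Finset.sum_nonneg fun q _ => ?_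
    split
    · exact le_rfl
    · exact mul_nonneg (hDs0 _ _) (hprodn _)
  have hbdd : BddBelow ((fun y => dDist (prodD Ds) X y) '' L) := by
    refine ⟨0, fun b hb => ?_⟩
    obtain ⟨Y, -, rfl⟩ := hb
    exact hDn Y
  have hmain : dSetDist (prodD Ds) X L / 2
      ≤ dSetDist (prodD' (granDist a) Ds) (gcatB X) (gcatB '' L) := by
    rw [dSetDist]
    refine le_csInf ((hL.image gcatB).image _) ?_
    rintro b ⟨Z, ⟨Y, hY, rfl⟩, rfl⟩
    have h1 : dSetDist (prodD Ds) X L ≤ dDist (prodD Ds) X Y :=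
      csInf_le hbdd ⟨Y, hY, rfl⟩
    calc dSetDist (prodD Ds) X L / 2 ≤ dDist (prodD Ds) X Y / 2 := by linarith
      _ ≤ _ := key Y
  linarith
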